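/- If there exists a periodic (torsion) non-sofic group with no element of order 2, then there exists a periodic non-sofic group D that is divisible, i.e., for every d in D and every natural number n ≥ 1 there exists h in D with h^n = d. -/

import Mathlib

/-- The normalized Hamming distance between two permutations of `Fin n`:
the number of points where they differ, divided by `n`. -/
noncomputable def permHammingDist {n : ℕ} (σ τ : Equiv.Perm (Fin n)) : ℝ :=
  ((Finset.univ.filter fun i => σ i ≠ τ i).card : ℝ) / n

/-- A group `G` is sofic if for every finite subset `F ⊆ G` and every `ε > 0` there exist
`n ≥ 1` and a map `θ` from `F` to `Sym(Fin n)` (extended to all of `G`) such that: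
(i) `θ` is an `ε`-approximate homomorphism on `F`;
(ii) `θ` almost sends the identity to the identity;
(iii) distinct elements of `F` are sent to permutations at Hamming distance at least `1/4`. -/
def IsSofic (G : Type*) [Group G] : Prop :=
  ∀ (F : Finset G) (ε : ℝ), 0 < ε →
    ∃ n : ℕ, 1 ≤ n ∧ ∃ θ : G → Equiv.Perm (Fin n),
      (∀ g h : G, g ∈ F → h ∈ F → g * h ∈ F →
        permHammingDist (θ g * θ h) (θ (g * h)) < ε) ∧
      ((1 : G) ∈ F → permHammingDist (θ 1) 1 < ε) ∧
      (∀ x y : G, x ∈ F → y ∈ F → x ≠ y → 1 / 4 ≤ permHammingDist (θ x) (θ y))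

/-- A group is minimal non-sofic if it is not sofic but every proper subgroup is sofic. -/
def IsMinimalNonSofic (G : Type*) [Group G] : Prop :=
  ¬ IsSofic G ∧ ∀ H : Subgroup G, H ≠ ⊤ → IsSofic H

/-- soficity transfers along injective homomorphisms (subgroup of sofic is sofic). -/
theorem isSofic_of_injective {G D : Type*} [Group G] [Group D] (f : G →* D)
    (hf : Function.Injective f) (hD : IsSofic D) : IsSofic G := by
  classical
  intro F ε hε
  obtain ⟨n, hn, θD, h1, h2, h3⟩ := hD (F.image f) ε hε
  refine ⟨n, hn, fun g => θD (f g), ?_, ?_, ?_⟩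
  · intro g h hg hh hgh
    have := h1 (f g) (f h) (Finset.mem_image_of_mem f hg) (Finset.mem_image_of_mem f hh)
      (by rw [← map_mul]; exact Finset.mem_image_of_mem f hgh)
    rw [← map_mul] at this
    exact this
  · intro h1'
    have := h2 (by rw [← map_one f]; exact Finset.mem_image_of_mem f h1')
    simpa using this
  · intro x y hx hy hxy
    exact h3 (f x) (f y) (Finset.mem_image_of_mem f hx) (Finset.mem_image_of_mem f hy)
      (fun e => hxy (hf e))

section Step

variable (H : Type) [Group H] (m : ℕ)

/-- translation automorphism of the base of the wreath product -/
def rho (t : ZMod m) : MulAut (ZMod m → H) where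
  toFun f := fun i => f (i - t)
  invFun f := fun i => f (i + t)
  left_inv f := funext fun i => by simp
  right_inv f := funext fun i => by simp
  map_mul' f g := rfl

/-- the action of `Multiplicative (ZMod m)` on `ZMod m → H` by translations -/
def phi : Multiplicative (ZMod m) →* MulAut (ZMod m → H) where
  toFun t := rho H m t.toAdd
  map_one' := by
    ext f i
    simp [rho]
  map_mul' s t := by
    ext f i
    simp [rho, sub_sub]

/-- the wreath product `H ≀ (ZMod m)` -/
abbrev Step : Type := SemidirectProduct (ZMod m → H) (Multiplicative (ZMod m)) (phi H m)

/-- the diagonal embedding of `H` into the wreath product -/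
def diag : H →* Step H m :=
  SemidirectProduct.inl.comp
    { toFun := fun h => (fun _ => h : ZMod m → H)
      map_one' := rfl
      map_mul' := fun _ _ => rfl }

lemma diag_injective [NeZero m] : Function.Injective (diag H m) := by
  intro a b hab
  have h1 := congrArg SemidirectProduct.left hab
  exact congrFun h1 0

lemma step_pow (f : ZMod m → H) (t : Multiplicative (ZMod m)) (n : ℕ) :
    (⟨f, t⟩ : Step H m) ^ n
      = ⟨((List.range n).map (fun j => phi H m (t ^ j) f)).prod, t ^ n⟩ := by
  induction n with
  | zero =>
    simp only [pow_zero, List.range_zero, List.map_nil, List.prod_nil]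
    rfl
  | succ n ih =>
    rw [pow_succ, ih, SemidirectProduct.mul_def]
    congr 1
    · rw [List.range_succ, List.map_append, List.prod_append]
      simp
    · rw [pow_succ]

lemma zmod_pow_card [NeZero m] (t : Multiplicative (ZMod m)) : t ^ m = 1 := by
  have h0 : (t ^ m).toAdd = (0 : ZMod m) := by
    rw [toAdd_pow]
    simp [nsmul_eq_mul, ZMod.natCast_self]
  rw [← ofAdd_toAdd (t ^ m), h0]
  rfl

/-- a list product where all entries but one are `1` -/
lemma list_prod_single (g : ℕ → H) (n j0 : ℕ) (hj : j0 < n)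
    (h1 : ∀ j < n, j ≠ j0 → g j = 1) : ((List.range n).map g).prod = g j0 := by
  induction n with
  | zero => omega
  | succ n ih =>
    rw [List.range_succ, List.map_append, List.prod_append]
    simp only [List.map_cons, List.map_nil, List.prod_cons, List.prod_nil, mul_one]
    rcases Nat.lt_succ_iff_lt_or_eq.mp hj with hlt | rfl
    · rw [h1 n (Nat.lt_succ_self n) (Nat.ne_of_gt hlt), mul_one]
      exact ih hlt (fun j hjn hne => h1 j (hjn.trans (Nat.lt_succ_self n)) hne)
    · have hz : ((List.range j0).map g).prod = 1 := by
        apply List.prod_eq_one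
        intro x hx
        obtain ⟨j, hjm, rfl⟩ := List.mem_map.mp hx
        exact h1 j ((List.mem_range.mp hjm).trans (Nat.lt_succ_self j0))
          (Nat.ne_of_lt (List.mem_range.mp hjm))
      rw [hz, one_mul]

lemma step_root [NeZero m] (h : H) : ∃ w : Step H m, w ^ m = diag H m h := by
  classical
  refine ⟨⟨fun i => if i = 0 then h else 1, Multiplicative.ofAdd 1⟩, ?_⟩
  rw [step_pow]
  apply SemidirectProduct.ext
  · show ((List.range m).map fun j =>
        phi H m (Multiplicative.ofAdd (1 : ZMod m) ^ j) fun i => if i = 0 then h else 1).prod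
      = fun _ => h
    funext i
    rw [Pi.list_prod_apply, List.map_map]
    have key : ((fun f : ZMod m → H => f i) ∘ fun j =>
        phi H m (Multiplicative.ofAdd (1 : ZMod m) ^ j) fun i => if i = 0 then h else 1)
        = fun j : ℕ => if (j : ZMod m) = i then h else 1 := by
      funext j
      show (if i - (Multiplicative.ofAdd (1 : ZMod m) ^ j).toAdd = 0 then h else 1) = _
      rw [toAdd_pow]
      simp only [toAdd_ofAdd, nsmul_eq_mul, mul_one]
      simp [sub_eq_zero, eq_comm]
    rw [key, list_prod_single H (fun j : ℕ => if (j : ZMod m) = i then h else 1) m i.val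
      (ZMod.val_lt i) ?side]
    · exact if_pos (ZMod.natCast_rightInverse i)
    case side =>
      intro j hj hne
      apply if_neg
      intro hc
      exact hne (by rw [← ZMod.val_cast_of_lt hj, hc])
  · show Multiplicative.ofAdd (1 : ZMod m) ^ m = 1
    exact zmod_pow_card m _

lemma step_torsion [NeZero m] (hH : ∀ h : H, IsOfFinOrder h) (w : Step H m) :
    IsOfFinOrder w := by
  obtain ⟨f, t⟩ := w
  have hpow : (⟨f, t⟩ : Step H m) ^ m
      = SemidirectProduct.inl (((List.range m).map (fun j => phi H m (t ^ j) f)).prod) := by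
    rw [step_pow]
    apply SemidirectProduct.ext
    · rfl
    · show t ^ m = 1
      exact zmod_pow_card m t
  set F : ZMod m → H := ((List.range m).map (fun j => phi H m (t ^ j) f)).prod with hF
  have : Fintype (ZMod m) := ZMod.fintype m
  set N : ℕ := ∏ i : ZMod m, orderOf (F i) with hN
  have hNpos : 0 < N := Finset.prod_pos (fun i _ => (hH (F i)).orderOf_pos)
  have hFN : F ^ N = 1 := by
    funext i
    show F i ^ N = 1
    exact orderOf_dvd_iff_pow_eq_one.mp (Finset.dvd_prod_of_mem _ (Finset.mem_univ i))
  apply isOfFinOrder_iff_pow_eq_one.mpr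
  refine ⟨m * N, Nat.mul_pos (Nat.pos_of_ne_zero (NeZero.ne m)) hNpos, ?_⟩
  rw [pow_mul, hpow, ← map_pow, hFN, map_one]

end Step

section Chain

variable (G : Type) [Group G]

/-- the iterated wreath product chain, bundled with its group structure -/
def chain : ℕ → (α : Type) ×' Group α
  | 0 => ⟨G, inferInstance⟩
  | k + 1 =>
    letI := (chain k).2
    ⟨Step (chain k).1 (k + 1).factorial, inferInstance⟩

/-- the underlying types of the chain -/
def CS (k : ℕ) : Type := (chain G k).1

instance csGroup (k : ℕ) : Group (CS G k) := (chain G k).2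

instance factNeZero (k : ℕ) : NeZero (k + 1).factorial := ⟨Nat.factorial_ne_zero _⟩

/-- the connecting (diagonal) embeddings of the chain -/
def cstep (k : ℕ) : CS G k →* CS G (k + 1) := diag (CS G k) (k + 1).factorial

lemma cstep_injective (k : ℕ) : Function.Injective (cstep G k) :=
  diag_injective (CS G k) (k + 1).factorial

lemma cs_torsion (hG : ∀ g : G, IsOfFinOrder g) : ∀ k (x : CS G k), IsOfFinOrder x
  | 0, x => hG x
  | k + 1, x => step_torsion (CS G k) (k + 1).factorial (cs_torsion hG k) x

lemma cs_root (k n : ℕ) (hn : n ∣ (k + 1).factorial) (x : CS G k) :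
    ∃ w : CS G (k + 1), w ^ n = cstep G k x := by
  obtain ⟨w, hw⟩ := step_root (CS G k) (k + 1).factorial x
  refine ⟨w ^ ((k + 1).factorial / n), ?_⟩
  show ((w ^ ((k + 1).factorial / n)) ^ n : Step (CS G k) (k + 1).factorial) = cstep G k x
  rw [← pow_mul, Nat.div_mul_cancel hn, hw]
  rfl

end Chain

section Limit

variable (S : ℕ → Type) [∀ k, Group (S k)] (f : ∀ k, S k →* S (k + 1))

/-- the transition maps of the direct system -/
def tr {i j : ℕ} (h : i ≤ j) : S i →* S j :=
  Nat.leRecOn h (fun {k} g => (f k).comp g) (MonoidHom.id (S i))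

lemma tr_self {i : ℕ} (h : i ≤ i) (x : S i) : tr S f h x = x := by
  rw [tr, Nat.leRecOn_self]
  rfl

lemma tr_succ {i j : ℕ} (h : i ≤ j) (h' : i ≤ j + 1) (x : S i) :
    tr S f h' x = f j (tr S f h x) := by
  rw [tr, tr, Nat.leRecOn_succ h]
  rfl

lemma tr_tr {i j k : ℕ} (hij : i ≤ j) (hjk : j ≤ k) (x : S i) :
    tr S f hjk (tr S f hij x) = tr S f (hij.trans hjk) x := by
  induction k, hjk using Nat.le_induction with
  | base => rw [tr_self]
  | succ k hk ih =>
    rw [tr_succ S f hk (hk.trans (Nat.le_succ k)), ih,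
      tr_succ S f (hij.trans hk) (hij.trans (hk.trans (Nat.le_succ k)))]

lemma tr_injective (hf : ∀ k, Function.Injective (f k)) :
    ∀ {i j : ℕ} (h : i ≤ j), Function.Injective (tr S f h) := by
  intro i j h
  induction j, h using Nat.le_induction with
  | base => intro x y hxy; rwa [tr_self, tr_self] at hxy
  | succ k hk ih =>
    intro x y hxy
    rw [tr_succ S f hk, tr_succ S f hk] at hxy
    exact ih (hf k hxy)

/-- the equivalence relation defining the direct limit -/
def limRel (a b : Σ k, S k) : Prop :=
  ∃ (k : ℕ) (h₁ : a.1 ≤ k) (h₂ : b.1 ≤ k), tr S f h₁ a.2 = tr S f h₂ b.2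

lemma limRel_push {i j k K : ℕ} (hik : i ≤ k) (hjk : j ≤ k) (hkK : k ≤ K)
    {x : S i} {y : S j} (h : tr S f hik x = tr S f hjk y) :
    tr S f (hik.trans hkK) x = tr S f (hjk.trans hkK) y := by
  rw [← tr_tr S f hik hkK, ← tr_tr S f hjk hkK, h]

def limSetoid : Setoid (Σ k, S k) where
  r := limRel S f
  iseqv := by
    constructor
    · exact fun a => ⟨a.1, le_refl _, le_refl _, rfl⟩
    · rintro a b ⟨k, h₁, h₂, h⟩
      exact ⟨k, h₂, h₁, h.symm⟩
    · rintro a b c ⟨k, h₁, h₂, h⟩ ⟨k', h₁', h₂', h'⟩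
      refine ⟨max k k', h₁.trans (le_max_left _ _), h₂'.trans (le_max_right _ _), ?_⟩
      have e1 := limRel_push S f h₁ h₂ (le_max_left k k') h
      have e2 := limRel_push S f h₁' h₂' (le_max_right k k') h'
      exact e1.trans e2

/-- the direct limit of the direct system -/
def Lim : Type := Quotient (limSetoid S f)

/-- class of an element -/
def limMk (k : ℕ) (x : S k) : Lim S f := Quotient.mk (limSetoid S f) ⟨k, x⟩

lemma limMk_tr {i j : ℕ} (h : i ≤ j) (x : S i) :
    limMk S f i x = limMk S f j (tr S f h x) := by
  apply Quotient.sound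
  exact ⟨j, h, le_refl j, by rw [tr_self]⟩

instance : One (Lim S f) := ⟨limMk S f 0 1⟩

instance : Mul (Lim S f) :=
  ⟨Quotient.lift₂
    (fun a b => limMk S f (max a.1 b.1)
      (tr S f (le_max_left a.1 b.1) a.2 * tr S f (le_max_right a.1 b.1) b.2))
    (by
      rintro a b a' b' ⟨k, h₁, h₂, h⟩ ⟨k', h₁', h₂', h'⟩
      set K := max (max a.1 b.1) (max (max a'.1 b'.1) (max k k')) with hK
      have hak : k ≤ K := le_trans (le_max_left _ _) (le_trans (le_max_right _ _) (le_max_right _ _))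
      have hbk : k' ≤ K := le_trans (le_max_right _ _) (le_trans (le_max_right _ _) (le_max_right _ _))
      have hm1 : max a.1 b.1 ≤ K := le_max_left _ _
      have hm2 : max a'.1 b'.1 ≤ K := le_trans (le_max_left _ _) (le_max_right _ _)
      rw [limMk_tr S f hm1, limMk_tr S f hm2]
      congr 1
      rw [map_mul, map_mul, tr_tr, tr_tr, tr_tr, tr_tr]
      have e1 := limRel_push S f h₁ h₂ hak h
      have e2 := limRel_push S f h₁' h₂' hbk h'
      rw [e1, e2])⟩

instance : Inv (Lim S f) :=
  ⟨Quotient.map (fun a => ⟨a.1, a.2⁻¹⟩)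
    (by
      rintro a b ⟨k, h₁, h₂, h⟩
      exact ⟨k, h₁, h₂, by rw [map_inv, map_inv, h]⟩)⟩

lemma limMk_mul {i : ℕ} (x y : S i) :
    limMk S f i x * limMk S f i y = limMk S f i (x * y) := by
  show limMk S f (max i i) _ = _
  apply Quotient.sound
  refine ⟨max i i, le_refl _, le_max_left i i, ?_⟩
  rw [tr_self, map_mul]

lemma limMk_inv {i : ℕ} (x : S i) : (limMk S f i x)⁻¹ = limMk S f i x⁻¹ := rfl

lemma limMk_one (i : ℕ) : limMk S f i 1 = 1 := by
  show _ = limMk S f 0 1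
  rw [limMk_tr S f (Nat.zero_le i) (1 : S 0), map_one]

lemma lim_exists (d : Lim S f) : ∃ (k : ℕ) (x : S k), d = limMk S f k x := by
  induction d using Quotient.inductionOn with
  | h a => exact ⟨a.1, a.2, rfl⟩

instance limGroup : Group (Lim S f) where
  mul_assoc a b c := by
    obtain ⟨i, x, rfl⟩ := lim_exists S f a
    obtain ⟨j, y, rfl⟩ := lim_exists S f b
    obtain ⟨k, z, rfl⟩ := lim_exists S f c
    set K := max i (max j k) with hK
    rw [limMk_tr S f (le_max_left i (max j k)) x,
      limMk_tr S f (le_trans (le_max_left j k) (le_max_right i (max j k))) y,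
      limMk_tr S f (le_trans (le_max_right j k) (le_max_right i (max j k))) z,
      limMk_mul, limMk_mul, limMk_mul, limMk_mul, mul_assoc]
  one_mul a := by
    obtain ⟨i, x, rfl⟩ := lim_exists S f a
    rw [← limMk_one S f i, limMk_mul, one_mul]
  mul_one a := by
    obtain ⟨i, x, rfl⟩ := lim_exists S f a
    rw [← limMk_one S f i, limMk_mul, mul_one]
  inv_mul_cancel a := by
    obtain ⟨i, x, rfl⟩ := lim_exists S f a
    rw [limMk_inv, limMk_mul, inv_mul_cancel, limMk_one]

/-- the canonical maps into the direct limit -/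
def limι (k : ℕ) : S k →* Lim S f where
  toFun x := limMk S f k x
  map_one' := limMk_one S f k
  map_mul' x y := (limMk_mul S f x y).symm

lemma limι_compat {i j : ℕ} (h : i ≤ j) (x : S i) :
    limι S f j (tr S f h x) = limι S f i x :=
  (limMk_tr S f h x).symm

lemma limι_injective (hf : ∀ k, Function.Injective (f k)) (k : ℕ) :
    Function.Injective (limι S f k) := by
  intro x y hxy
  obtain ⟨K, h₁, h₂, h⟩ := Quotient.exact hxy
  have : tr S f h₁ x = tr S f h₁ y := h
  exact tr_injective S f hf h₁ this

end Limit

/-- If there exists a periodic non-sofic group with no element of order 2, then there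
exists a periodic non-sofic group that is divisible. -/
theorem exists_divisible_periodic_nonSofic
    (h : ∃ (G : Type) (_ : Group G), (∀ g : G, IsOfFinOrder g) ∧ ¬ IsSofic G ∧
      ∀ g : G, orderOf g ≠ 2) :
    ∃ (D : Type) (_ : Group D), (∀ d : D, IsOfFinOrder d) ∧ ¬ IsSofic D ∧
      ∀ (d : D) (n : ℕ), 1 ≤ n → ∃ x : D, x ^ n = d := by
  obtain ⟨G, instG, hTor, hNS, -⟩ := h
  refine ⟨Lim (CS G) (cstep G), limGroup (CS G) (cstep G), ?_, ?_, ?_⟩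
  · -- torsion
    intro d
    obtain ⟨k, x, rfl⟩ := lim_exists (CS G) (cstep G) d
    obtain ⟨N, hN, hxN⟩ := isOfFinOrder_iff_pow_eq_one.mp (cs_torsion G hTor k x)
    refine isOfFinOrder_iff_pow_eq_one.mpr ⟨N, hN, ?_⟩
    rw [show limMk (CS G) (cstep G) k x = limι (CS G) (cstep G) k x from rfl,
      ← map_pow, hxN, map_one]
  · -- non-sofic
    intro hD
    exact hNS (isSofic_of_injective (limι (CS G) (cstep G) 0)
      (limι_injective (CS G) (cstep G) (cstep_injective G) 0) hD)
  · -- divisible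
    intro d n hn
    obtain ⟨k, x, rfl⟩ := lim_exists (CS G) (cstep G) d
    set j := max k n with hj
    have hkj : k ≤ j := le_max_left k n
    have hdvd : n ∣ (j + 1).factorial :=
      Nat.dvd_factorial hn (le_trans (le_max_right k n) (Nat.le_succ j))
    obtain ⟨w, hw⟩ := cs_root G j n hdvd (tr (CS G) (cstep G) hkj x)
    refine ⟨limι (CS G) (cstep G) (j + 1) w, ?_⟩
    rw [← map_pow, hw]
    have e1 : cstep G j (tr (CS G) (cstep G) hkj x)
        = tr (CS G) (cstep G) (Nat.le_succ j) (tr (CS G) (cstep G) hkj x) := by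
      rw [tr_succ (CS G) (cstep G) (le_refl j) (Nat.le_succ j), tr_self]
    rw [e1, limι_compat, limι_compat]
    rfl
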